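/- arXiv:1105.4443 — 3 statements merged into one kernel-verified Lean document; each statement's English description precedes it below -/
import Mathlib

section
/- Let G be a perfect group admitting a non-trivial homogeneous quasi-morphism q. Then the commutator length function cl : G → ℕ is unbounded; more precisely, for any g with q(g) ≠ 0, cl(gᵖ) → ∞ as p → ∞. -/
theorem commutator_length_unbounded_of_nontrivial_quasimorphism
    {G : Type*} [Group G] (q : G → ℝ) (D : ℝ) (hD : 0 < D)
    (hq : ∀ a b : G, |q (a * b) - q a - q b| ≤ D)
    (hhom : ∀ (a : G) (n : ℤ), q (a ^ n) = (n : ℝ) * q a)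
    (hnontrivial : ∃ g : G, q g ≠ 0)
    (cl : G → ℕ)
    (hcl_exists : ∀ g : G, ∃ a b : Fin (cl g) → G,
      g = (List.ofFn (fun i => a i * b i * (a i)⁻¹ * (b i)⁻¹)).prod)
    (hcl_min : ∀ (g : G) (n : ℕ) (a b : Fin n → G),
      g = (List.ofFn (fun i => a i * b i * (a i)⁻¹ * (b i)⁻¹)).prod → cl g ≤ n) :
    (¬ ∃ C : ℕ, ∀ g : G, cl g ≤ C) ∧
      ∀ g : G, q g ≠ 0 →
        Filter.Tendsto (fun p : ℕ => cl (g ^ p)) Filter.atTop Filter.atTop := by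
  -- q 1 = 0
  have hq1 : q 1 = 0 := by
    have := hhom 1 0
    simpa using this
  -- q a⁻¹ = - q a
  have hqinv : ∀ a : G, q a⁻¹ = - q a := by
    intro a
    have := hhom a (-1)
    simpa using this
  -- bound on commutators
  have hcomm : ∀ a b : G, |q (a * b * a⁻¹ * b⁻¹)| ≤ 3 * D := by
    intro a b
    have h1 := hq (a * b * a⁻¹) b⁻¹
    have h2 := hq (a * b) a⁻¹
    have h3 := hq a b
    simp only [hqinv] at h1 h2
    rw [abs_le] at h1 h2 h3 ⊢
    constructor <;> nlinarith [h1.1, h1.2, h2.1, h2.2, h3.1, h3.2]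
  -- bound on products of commutators (lists)
  have hlist : ∀ l : List G, (∀ c ∈ l, ∃ a b : G, c = a * b * a⁻¹ * b⁻¹) →
      |q l.prod| ≤ 4 * l.length * D := by
    intro l
    induction l with
    | nil => intro _; simp [hq1]
    | cons c l ih =>
      intro h
      obtain ⟨a, b, hc⟩ := h c List.mem_cons_self
      have hl := ih (fun x hx => h x (List.mem_cons_of_mem c hx))
      have h1 := hq c l.prod
      have h2 : |q c| ≤ 3 * D := hc ▸ hcomm a b
      rw [List.prod_cons]
      rw [abs_le] at h1 h2 hl ⊢
      push_cast [List.length_cons]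
      constructor <;> nlinarith [h1.1, h1.2, h2.1, h2.2, hl.1, hl.2]
  -- main estimate: p * |q g| ≤ 4 * cl (g^p) * D
  have key : ∀ (g : G) (p : ℕ), (p : ℝ) * |q g| ≤ 4 * (cl (g ^ p)) * D := by
    intro g p
    obtain ⟨a, b, hab⟩ := hcl_exists (g ^ p)
    have hlen : (List.ofFn (fun i => a i * b i * (a i)⁻¹ * (b i)⁻¹)).length = cl (g ^ p) :=
      List.length_ofFn
    have hb := hlist (List.ofFn (fun i => a i * b i * (a i)⁻¹ * (b i)⁻¹))
      (by
        intro c hc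
        rw [List.mem_ofFn] at hc
        obtain ⟨i, hi⟩ := hc
        exact ⟨a i, b i, hi.symm⟩)
    rw [hlen, ← hab] at hb
    have hpow : q (g ^ p) = (p : ℝ) * q g := by
      have := hhom g (p : ℤ)
      simpa [zpow_natCast] using this
    calc (p : ℝ) * |q g| = |q (g ^ p)| := by
          rw [hpow, abs_mul, abs_of_nonneg (by positivity : (0:ℝ) ≤ (p:ℝ))]
      _ ≤ 4 * (cl (g ^ p)) * D := hb
  have tend : ∀ g : G, q g ≠ 0 →
      Filter.Tendsto (fun p : ℕ => cl (g ^ p)) Filter.atTop Filter.atTop := by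
    intro g hg
    rw [Filter.tendsto_atTop]
    intro N
    have hqg : 0 < |q g| := abs_pos.mpr hg
    obtain ⟨P, hP⟩ := exists_nat_ge (4 * N * D / |q g|)
    rw [Filter.eventually_atTop]
    refine ⟨P, fun p hp => ?_⟩
    have h1 : 4 * (N:ℝ) * D ≤ (p : ℝ) * |q g| := by
      have hp' : (P : ℝ) ≤ (p : ℝ) := by exact_mod_cast hp
      rw [div_le_iff₀ hqg] at hP
      nlinarith
    have h2 := key g p
    have : (N : ℝ) ≤ (cl (g ^ p) : ℝ) := by nlinarith
    exact_mod_cast this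
  refine ⟨?_, tend⟩
  rintro ⟨C, hC⟩
  obtain ⟨g, hg⟩ := hnontrivial
  obtain ⟨p, hp⟩ := ((tend g hg).eventually (Filter.eventually_gt_atTop C)).exists
  exact absurd (hC (g ^ p)) (not_le.mpr hp)
end

section
/- Let F ∈ Homeo_ℤ(ℝ) and r₀ ∈ ℝ. Then for every natural number n ≥ 1, |Fⁿ(r₀) - n·F(r₀) + (n-1)·r₀| ≤ n - 1. -/
def HomeoZ (F : ℝ → ℝ) : Prop :=
  Continuous F ∧ StrictMono F ∧ Function.Bijective F ∧ ∀ x : ℝ, F (x + 1) = F x + 1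

lemma homeoZ_int_trans (F : ℝ → ℝ) (hF : HomeoZ F) (m : ℤ) (x : ℝ) :
    F (x + m) = F x + m := by
  obtain ⟨-, -, -, h1⟩ := hF
  induction m using Int.induction_on with
  | zero => simp
  | succ k ih =>
      push_cast
      rw [show x + ((k : ℝ) + 1) = (x + k) + 1 by ring, h1]
      push_cast at ih
      rw [ih]; ring
  | pred k ih =>
      push_cast
      have h2 := h1 (x + (-(k : ℝ) - 1))
      rw [show x + (-(k : ℝ) - 1) + 1 = x + -(k : ℝ) by ring] at h2
      push_cast at ih
      linarith

lemma homeoZ_disp (F : ℝ → ℝ) (hF : HomeoZ F) (x y : ℝ) :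
    |(F y - y) - (F x - x)| ≤ 1 := by
  have hmono := hF.2.1
  set m : ℤ := ⌊y - x⌋ with hm
  have h1 : (m : ℝ) ≤ y - x := Int.floor_le _
  have h2 : y - x < m + 1 := Int.lt_floor_add_one _
  have hle : F (x + m) ≤ F y := hmono.monotone (by linarith)
  have hlt : F y ≤ F (x + (m + 1 : ℤ)) := hmono.monotone (by push_cast; linarith)
  rw [homeoZ_int_trans F hF m x] at hle
  rw [homeoZ_int_trans F hF (m+1) x] at hlt
  push_cast at hlt
  rw [abs_le]
  constructor <;> linarith

theorem iterate_estimate_for_circle_lifts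
    (F : ℝ → ℝ) (hF : HomeoZ F) (r₀ : ℝ) (n : ℕ) (hn : 1 ≤ n) :
    |F^[n] r₀ - (n : ℝ) * F r₀ + ((n : ℝ) - 1) * r₀| ≤ (n : ℝ) - 1 := by
  induction n with
  | zero => omega
  | succ k ih =>
      rcases Nat.eq_or_lt_of_le hn with h | h
      · simp [← h]
      · have hk : 1 ≤ k := by omega
        have ihk := ih hk
        have hiter : F^[k+1] r₀ = F (F^[k] r₀) := Function.iterate_succ_apply' F k r₀
        have hdisp := homeoZ_disp F hF r₀ (F^[k] r₀)
        have hkey : F^[k+1] r₀ - ((k+1 : ℕ) : ℝ) * F r₀ + (((k+1 : ℕ) : ℝ) - 1) * r₀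
            = ((F (F^[k] r₀) - F^[k] r₀) - (F r₀ - r₀))
              + (F^[k] r₀ - (k : ℝ) * F r₀ + ((k : ℝ) - 1) * r₀) := by
          rw [hiter]; push_cast; ring
        rw [hkey]
        calc |_ + _| ≤ |(F (F^[k] r₀) - F^[k] r₀) - (F r₀ - r₀)|
              + |F^[k] r₀ - (k : ℝ) * F r₀ + ((k : ℝ) - 1) * r₀| := abs_add_le _ _
          _ ≤ 1 + ((k : ℝ) - 1) := add_le_add hdisp ihk
          _ = ((k+1 : ℕ) : ℝ) - 1 := by push_cast; ring
end

section
/- Let H be the closed upper half plane ℝ × [0,∞). Every compactly supported homeomorphism h of H that is isotopic to the identity is a single commutator in the group Homeo₀(H): there exist g, φ in Homeo₀(H) with h = g φ g⁻¹ φ⁻¹. -/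
/-- The closed upper half plane `ℝ × [0,∞)`. -/
abbrev HalfPlane : Type := {p : ℝ × ℝ // 0 ≤ p.2}

/-- A permutation of the half plane which is a homeomorphism. -/
def IsHomeo (h : Equiv.Perm HalfPlane) : Prop :=
  Continuous h ∧ Continuous h.symm

/-- `h` has compact support. -/
def CompactSupp (h : Equiv.Perm HalfPlane) : Prop :=
  ∃ K : Set HalfPlane, IsCompact K ∧ ∀ x ∉ K, h x = x

/-- `h` is isotopic to the identity through (compactly supported) homeomorphisms. -/
def IsotopicToId (h : Equiv.Perm HalfPlane) : Prop :=
  ∃ Φ : Set.Icc (0:ℝ) 1 → Equiv.Perm HalfPlane,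
    (∀ t, IsHomeo (Φ t) ∧ CompactSupp (Φ t)) ∧
    Continuous (fun p : Set.Icc (0:ℝ) 1 × HalfPlane => Φ p.1 p.2) ∧
    Φ ⟨0, by norm_num⟩ = 1 ∧ Φ ⟨1, by norm_num⟩ = h

/-- An element of `Homeo₀(ℍ)` (compactly supported homeomorphisms isotopic to
the identity). -/
def InHomeoZero (h : Equiv.Perm HalfPlane) : Prop :=
  IsHomeo h ∧ CompactSupp h ∧ IsotopicToId h


noncomputable section
open Equiv

-- from t1
def m (t : ℝ) (q : HalfPlane) : HalfPlane :=
  ⟨|t| • q.val, by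
    have : 0 ≤ |t| * q.val.2 := mul_nonneg (abs_nonneg t) q.2
    simpa [Prod.smul_snd] using this⟩
lemma m_val (t : ℝ) (q : HalfPlane) : (m t q).val = |t| • q.val := rfl
lemma m_norm (t : ℝ) (q : HalfPlane) : ‖(m t q).val‖ = |t| * ‖q.val‖ := by
  rw [m_val, norm_smul]; simp
lemma m_m (s t : ℝ) (q : HalfPlane) : m s (m t q) = m (s * t) q := by
  apply Subtype.ext; simp [m_val, smul_smul, abs_mul]
lemma m_one (q : HalfPlane) : m 1 q = q := by apply Subtype.ext; simp [m_val]
lemma m_inv_m (t : ℝ) (ht : t ≠ 0) (q : HalfPlane) : m t⁻¹ (m t q) = q := by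
  rw [m_m, inv_mul_cancel₀ ht, m_one]
lemma m_m_inv (t : ℝ) (ht : t ≠ 0) (q : HalfPlane) : m t (m t⁻¹ q) = q := by
  rw [m_m, mul_inv_cancel₀ ht, m_one]

-- swindle
def fixP (e : Perm HalfPlane) : Prop :=
  ∀ q : HalfPlane, (‖q.val‖ < 9/4 ∨ 11/4 < ‖q.val‖) → e q = q

lemma fixP_symm {e : Perm HalfPlane} (he : fixP e) : fixP e.symm := by
  intro q hq
  have := he q hq
  conv_lhs => rw [← this]
  exact e.symm_apply_apply q

lemma fixP_moves {e : Perm HalfPlane} (he : fixP e) {q : HalfPlane} (h : e q ≠ q) :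
    9/4 ≤ ‖(e q).val‖ ∧ ‖(e q).val‖ ≤ 11/4 := by
  by_contra hc
  push_neg at hc
  have : ‖(e q).val‖ < 9/4 ∨ 11/4 < ‖(e q).val‖ := by
    by_cases h1 : ‖(e q).val‖ < 9/4
    · exact Or.inl h1
    · exact Or.inr (hc (by linarith))
  have h2 := he (e q) this
  exact h (e.injective h2)

lemma fixP_norm {e : Perm HalfPlane} (he : fixP e) {q : HalfPlane}
    (h1 : 2 ≤ ‖q.val‖) (h2 : ‖q.val‖ ≤ 3) : 2 ≤ ‖(e q).val‖ ∧ ‖(e q).val‖ ≤ 3 := by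
  by_cases h : e q = q
  · rw [h]; exact ⟨h1, h2⟩
  · have := fixP_moves he h
    constructor <;> linarith [this.1, this.2]

def inA (k : ℕ) (q : HalfPlane) : Prop :=
  2 ≤ (2:ℝ)^k * ‖q.val‖ ∧ (2:ℝ)^k * ‖q.val‖ ≤ 3

lemma inA_unique {k j : ℕ} {q : HalfPlane} (hk : inA k q) (hj : inA j q) : k = j := by
  by_contra hne
  rcases Nat.lt_or_ge k j with h | h
  · have h2 : (2:ℝ)^(k+1) ≤ (2:ℝ)^j := pow_le_pow_right₀ (by norm_num) h
    have hn : 0 ≤ ‖q.val‖ := norm_nonneg _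
    have : (2:ℝ)^j * ‖q.val‖ ≥ 2 * ((2:ℝ)^k * ‖q.val‖) := by
      have := mul_le_mul_of_nonneg_right h2 hn
      rw [pow_succ] at this
      linarith
    linarith [hk.1, hj.2]
  · rcases Nat.lt_or_ge j k with h' | h'
    · have h2 : (2:ℝ)^(j+1) ≤ (2:ℝ)^k := pow_le_pow_right₀ (by norm_num) h'
      have hn : 0 ≤ ‖q.val‖ := norm_nonneg _
      have : (2:ℝ)^k * ‖q.val‖ ≥ 2 * ((2:ℝ)^j * ‖q.val‖) := by
        have := mul_le_mul_of_nonneg_right h2 hn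
        rw [pow_succ] at this
        linarith
      linarith [hj.1, hk.2]
    · omega

open Classical in
def swF (e : Perm HalfPlane) (q : HalfPlane) : HalfPlane :=
  if h : ∃ k, inA k q then
    m ((2:ℝ)^(Classical.choose h))⁻¹ (e (m ((2:ℝ)^(Classical.choose h)) q))
  else q

lemma swF_of_inA (e : Perm HalfPlane) {k : ℕ} {q : HalfPlane} (h : inA k q) :
    swF e q = m ((2:ℝ)^k)⁻¹ (e (m ((2:ℝ)^k) q)) := by
  have hex : ∃ k, inA k q := ⟨k, h⟩
  classical
  rw [swF, dif_pos hex, inA_unique (Classical.choose_spec hex) h]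

lemma swF_of_not (e : Perm HalfPlane) {q : HalfPlane} (h : ¬ ∃ k, inA k q) :
    swF e q = q := by classical rw [swF, dif_neg h]

lemma two_pow_pos (k : ℕ) : (0:ℝ) < 2^k := by positivity

lemma m_pow_norm (k : ℕ) (q : HalfPlane) : ‖(m ((2:ℝ)^k) q).val‖ = (2:ℝ)^k * ‖q.val‖ := by
  rw [m_norm, abs_of_pos (two_pow_pos k)]

lemma m_pow_inv_norm (k : ℕ) (q : HalfPlane) :
    ‖(m ((2:ℝ)^k)⁻¹ q).val‖ = ((2:ℝ)^k)⁻¹ * ‖q.val‖ := by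
  rw [m_norm, abs_of_pos (inv_pos.2 (two_pow_pos k))]

lemma swF_mem {e : Perm HalfPlane} (he : fixP e) {k : ℕ} {q : HalfPlane} (h : inA k q) :
    inA k (m ((2:ℝ)^k)⁻¹ (e (m ((2:ℝ)^k) q))) := by
  have h1 : 2 ≤ ‖(m ((2:ℝ)^k) q).val‖ := by rw [m_pow_norm]; exact h.1
  have h2 : ‖(m ((2:ℝ)^k) q).val‖ ≤ 3 := by rw [m_pow_norm]; exact h.2
  obtain ⟨h3, h4⟩ := fixP_norm he h1 h2
  have hp := two_pow_pos k
  have key : (2:ℝ)^k * (((2:ℝ)^k)⁻¹ * ‖(e (m ((2:ℝ)^k) q)).val‖)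
      = ‖(e (m ((2:ℝ)^k) q)).val‖ := by
    field_simp
  constructor <;> rw [m_pow_inv_norm, key] <;> assumption

lemma swF_inA_exists {e : Perm HalfPlane} (he : fixP e) {k : ℕ} {q : HalfPlane} (h : inA k q) :
    ∃ j, inA j (swF e q) := by
  rw [swF_of_inA e h]; exact ⟨k, swF_mem he h⟩

def swE (e : Perm HalfPlane) (he : fixP e) : Perm HalfPlane where
  toFun := swF e
  invFun := swF e.symm
  left_inv := by
    intro q
    by_cases h : ∃ k, inA k q
    · obtain ⟨k, hk⟩ := h
      rw [swF_of_inA e hk, swF_of_inA e.symm (swF_mem he hk)]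
      rw [m_m_inv _ (ne_of_gt (two_pow_pos k)), e.symm_apply_apply,
        m_inv_m _ (ne_of_gt (two_pow_pos k))]
    · rw [swF_of_not e h, swF_of_not e.symm h]
  right_inv := by
    intro q
    by_cases h : ∃ k, inA k q
    · obtain ⟨k, hk⟩ := h
      rw [swF_of_inA e.symm hk, swF_of_inA e (swF_mem (fixP_symm he) hk)]
      rw [m_m_inv _ (ne_of_gt (two_pow_pos k)), e.apply_symm_apply,
        m_inv_m _ (ne_of_gt (two_pow_pos k))]
    · rw [swF_of_not e.symm h, swF_of_not e h]

lemma continuous_m : Continuous (fun p : ℝ × HalfPlane => m p.1 p.2) := by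
  apply Continuous.subtype_mk
  exact (continuous_abs.comp continuous_fst).smul
    (continuous_subtype_val.comp continuous_snd)

lemma dist_H (a b : HalfPlane) : dist a b = ‖a.val - b.val‖ := by
  rw [Subtype.dist_eq, dist_eq_norm]

lemma swF_norm_le {e : Perm HalfPlane} (he : fixP e) (q : HalfPlane) :
    ‖(swF e q).val‖ ≤ 2 * ‖q.val‖ := by
  by_cases h : ∃ k, inA k q
  · obtain ⟨k, hk⟩ := h
    rw [swF_of_inA e hk]
    have h1 := (swF_mem he hk).2
    have h2 := hk.1
    have hp := two_pow_pos k
    nlinarith [norm_nonneg (m ((2:ℝ)^k)⁻¹ (e (m ((2:ℝ)^k) q))).val]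
  · rw [swF_of_not e h]
    linarith [norm_nonneg q.val]

lemma contH : Continuous (fun q : HalfPlane => ‖q.val‖) :=
  continuous_subtype_val.norm

lemma swF_id_big (e : Perm HalfPlane) {q : HalfPlane} (h : 3 < ‖q.val‖) : swF e q = q := by
  apply swF_of_not
  rintro ⟨k, hk⟩
  have h1 : (1:ℝ) ≤ 2^k := one_le_pow₀ (by norm_num)
  nlinarith [hk.2]

lemma swF_continuous {e : Perm HalfPlane} (he : fixP e) (ce : Continuous e) :
    Continuous (swF e) := by
  rw [continuous_iff_continuousAt]
  intro q₀
  by_cases h0 : ‖q₀.val‖ = 0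
  · rw [Metric.continuousAt_iff]
    intro ε hε
    refine ⟨ε/3, by linarith, fun {q} hq => ?_⟩
    have hq₀ : swF e q₀ = q₀ := by
      apply swF_of_not
      rintro ⟨k, hk⟩
      obtain ⟨hk1, hk2⟩ := hk
      rw [h0, mul_zero] at hk1
      linarith
    have hv : q₀.val = 0 := norm_eq_zero.mp h0
    rw [dist_H, hv, sub_zero] at hq
    rw [hq₀, dist_H, hv, sub_zero]
    calc ‖(swF e q).val‖ ≤ 2 * ‖q.val‖ := swF_norm_le he q
    _ < ε := by linarith
  · by_cases hbig : 3 < ‖q₀.val‖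
    · apply ContinuousAt.congr (continuousAt_id)
      have hU : IsOpen {q : HalfPlane | 3 < ‖q.val‖} := isOpen_lt continuous_const contH
      filter_upwards [hU.mem_nhds hbig] with q hq
      exact (swF_id_big e hq).symm
    · push_neg at hbig
      have hpos : 0 < ‖q₀.val‖ := lt_of_le_of_ne (norm_nonneg _) (Ne.symm h0)
      -- find minimal k with 9/5 < 2^k * ‖q₀‖
      have hex : ∃ k : ℕ, 9/5 < 2^k * ‖q₀.val‖ := by
        obtain ⟨n, hn⟩ := pow_unbounded_of_one_lt (9/5/‖q₀.val‖) (one_lt_two (α := ℝ))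
        exact ⟨n, by rwa [div_lt_iff₀ hpos] at hn⟩
      classical
      set k := Nat.find hex with hkdef
      have hk1 : 9/5 < 2^k * ‖q₀.val‖ := Nat.find_spec hex
      have hk2 : 2^k * ‖q₀.val‖ < 37/10 := by
        rcases Nat.eq_zero_or_pos k with h | h
        · rw [h, pow_zero, one_mul]; linarith
        · have := Nat.find_min hex (m := k - 1) (by omega)
          push_neg at this
          have hkk : k = (k-1) + 1 := by omega
          rw [hkk, pow_succ]
          nlinarith
      have hW : IsOpen {q : HalfPlane | 9/5 < 2^k * ‖q.val‖ ∧ 2^k * ‖q.val‖ < 37/10} := by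
        apply IsOpen.inter
        · exact isOpen_lt continuous_const (continuous_const.mul contH)
        · exact isOpen_lt (continuous_const.mul contH) continuous_const
      have hmem : q₀ ∈ {q : HalfPlane | 9/5 < 2^k * ‖q.val‖ ∧ 2^k * ‖q.val‖ < 37/10} :=
        ⟨hk1, hk2⟩
      have hG : Continuous (fun q => m ((2:ℝ)^k)⁻¹ (e (m ((2:ℝ)^k) q))) := by
        have cm : ∀ t : ℝ, Continuous (m t) := by
          intro t
          exact continuous_m.comp (continuous_const.prodMk continuous_id)
        exact (cm _).comp (ce.comp (cm _))
      apply ContinuousAt.congr (hG.continuousAt)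
      filter_upwards [hW.mem_nhds hmem] with q hq
      obtain ⟨hql, hqu⟩ := hq
      have hn : 0 ≤ ‖q.val‖ := norm_nonneg _
      by_cases hj : ∃ j, inA j q
      · obtain ⟨j, hjq⟩ := hj
        have hjk : j = k := by
          by_contra hne
          rcases Nat.lt_or_ge j k with hlt | hge
          · have h2 : (2:ℝ)^(j+1) ≤ 2^k := pow_le_pow_right₀ (by norm_num) hlt
            have := mul_le_mul_of_nonneg_right h2 hn
            rw [pow_succ] at this
            nlinarith [hjq.1]
          · have hgt : k < j := by omega
            have h2 : (2:ℝ)^(k+1) ≤ 2^j := pow_le_pow_right₀ (by norm_num) hgt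
            have := mul_le_mul_of_nonneg_right h2 hn
            rw [pow_succ] at this
            nlinarith [hjq.2]
        subst hjk
        exact (swF_of_inA e hjq).symm
      · rw [swF_of_not e hj]
        have hnotk : ¬ inA k q := fun hk => hj ⟨k, hk⟩
        rw [inA] at hnotk
        push_neg at hnotk
        have : ‖(m ((2:ℝ)^k) q).val‖ < 9/4 ∨ 11/4 < ‖(m ((2:ℝ)^k) q).val‖ := by
          rw [m_pow_norm]
          by_cases hc : 2 ≤ (2:ℝ)^k * ‖q.val‖
          · exact Or.inr (by linarith [hnotk hc])
          · exact Or.inl (by linarith [not_le.mp hc])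
        rw [he _ this, m_inv_m _ (ne_of_gt (two_pow_pos k))]
/-- the radial scale factor of φ -/
noncomputable def sig (r : ℝ) : ℝ := if r ≤ 4 then 1/2 else if r ≤ 5 then 3 - 10 / max r 4 else 1
/-- the radial scale factor of φ⁻¹ -/
noncomputable def tau (s : ℝ) : ℝ := if s ≤ 2 then 2 else if s ≤ 5 then (s + 10) / (3 * max s 2) else 1

lemma sig_cont : Continuous sig := by
  unfold sig
  apply Continuous.if_le
  · exact continuous_const
  · apply Continuous.if_le
    · apply Continuous.sub continuous_const
      apply Continuous.div continuous_const (continuous_id.max continuous_const)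
      intro x; positivity
    · exact continuous_const
    · exact continuous_id
    · exact continuous_const
    · intro x hx; rw [hx]; norm_num [max_eq_left]
  · exact continuous_id
  · exact continuous_const
  · intro x hx; rw [hx]; norm_num [show max (4:ℝ) 4 = 4 from max_self 4]

lemma tau_cont : Continuous tau := by
  unfold tau
  apply Continuous.if_le
  · exact continuous_const
  · apply Continuous.if_le
    · apply Continuous.div (by continuity) (by continuity)
      intro x; positivity
    · exact continuous_const
    · exact continuous_id
    · exact continuous_const
    · intro x hx; rw [hx]; norm_num [max_eq_left]
  · exact continuous_id
  · exact continuous_const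
  · intro x hx; rw [hx]; norm_num [show max (2:ℝ) 2 = 2 from max_self 2]

lemma sig_pos (r : ℝ) : 0 < sig r := by
  unfold sig
  split_ifs with h1 h2
  · norm_num
  · push_neg at h1
    have : max r 4 = r := max_eq_left (by linarith)
    rw [this]
    have : 10 / r < 3 := by
      rw [div_lt_iff₀ (by linarith)]; linarith
    linarith
  · norm_num

lemma sig_le_one (r : ℝ) : sig r ≤ 1 := by
  unfold sig
  split_ifs with h1 h2
  · norm_num
  · push_neg at h1
    have : max r 4 = r := max_eq_left (by linarith)
    rw [this]
    have : 2 ≤ 10 / r := by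
      rw [le_div_iff₀ (by linarith)]; linarith
    linarith
  · exact le_refl 1

lemma tau_pos (s : ℝ) : 0 < tau s := by
  unfold tau
  split_ifs with h1 h2
  · norm_num
  · push_neg at h1
    have : max s 2 = s := max_eq_left (by linarith)
    rw [this]; positivity
  · norm_num

lemma sig_of_le (r : ℝ) (h : r ≤ 4) : sig r = 1/2 := if_pos h
lemma tau_of_le (s : ℝ) (h : s ≤ 2) : tau s = 2 := if_pos h
lemma sig_of_ge (r : ℝ) (h : 5 ≤ r) : sig r = 1 := by
  unfold sig
  rcases eq_or_lt_of_le h with h5 | h5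
  · rw [if_neg (by linarith), if_pos (le_of_eq h5.symm), max_eq_left (by linarith)]
    rw [← h5]; norm_num
  · rw [if_neg (by linarith), if_neg (by linarith)]

lemma tau_sig (r : ℝ) (hr : 0 ≤ r) : tau (sig r * r) * sig r = 1 := by
  by_cases h1 : r ≤ 4
  · rw [sig_of_le r h1, tau_of_le _ (by linarith)]; norm_num
  · push_neg at h1
    by_cases h2 : r ≤ 5
    · have hm : max r 4 = r := max_eq_left (by linarith)
      have hs : sig r = 3 - 10 / r := by unfold sig; rw [if_neg (by linarith), if_pos h2, hm]
      have hsr : sig r * r = 3 * r - 10 := by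
        rw [hs]; field_simp
      have h2' : 2 ≤ 3 * r - 10 := by linarith
      have h5' : 3 * r - 10 ≤ 5 := by linarith
      rw [hsr]
      by_cases he : 3 * r - 10 ≤ 2
      · have hr4 : r = 4 := by linarith
        subst hr4
        rw [tau_of_le _ he, hs]; norm_num
      · push_neg at he
        have ht : tau (3 * r - 10) = (3 * r) / (3 * (3 * r - 10)) := by
          unfold tau
          rw [if_neg (by linarith), if_pos h5', max_eq_left (by linarith)]
          ring_nf
        rw [ht, hs]
        field_simp
    · push_neg at h2
      rw [sig_of_ge r (by linarith), one_mul]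
      unfold tau
      rw [if_neg (by linarith), if_neg (by linarith)]
      norm_num

lemma tau_of_ge (s : ℝ) (h : 5 ≤ s) : tau s = 1 := by
  unfold tau
  rcases eq_or_lt_of_le h with h5 | h5
  · rw [if_neg (by linarith), if_pos (le_of_eq h5.symm), max_eq_left (by linarith), ← h5]
    norm_num
  · rw [if_neg (by linarith), if_neg (by linarith)]

lemma sig_tau (s : ℝ) (hs : 0 ≤ s) : sig (tau s * s) * tau s = 1 := by
  by_cases h1 : s ≤ 2
  · rw [tau_of_le s h1, sig_of_le _ (by linarith)]; norm_num
  · push_neg at h1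
    by_cases h2 : s ≤ 5
    · have hm : max s 2 = s := max_eq_left (by linarith)
      have ht : tau s = (s + 10) / (3 * s) := by
        unfold tau; rw [if_neg (by linarith), if_pos h2, hm]
      have hts : tau s * s = (s + 10) / 3 := by rw [ht]; field_simp
      have h4 : 4 ≤ (s + 10) / 3 := by linarith
      have h5 : (s + 10) / 3 ≤ 5 := by linarith
      rw [hts]
      by_cases he : (s + 10) / 3 ≤ 4
      · have hs2 : s = 2 := by linarith
        subst hs2
        rw [sig_of_le _ he, ht]; norm_num
      · push_neg at he
        have hsg : sig ((s + 10) / 3) = 3 - 10 / ((s + 10)/3) := by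
          unfold sig
          rw [if_neg (by linarith), if_pos h5, max_eq_left (by linarith)]
        rw [hsg, ht]
        have : s + 10 ≠ 0 := by linarith
        field_simp
        ring
    · push_neg at h2
      rw [tau_of_ge s (by linarith), one_mul]
      unfold sig
      rw [if_neg (by linarith), if_neg (by linarith)]
      norm_num

-- φ₁ : the radial squeeze homeomorphism
def phiE : Equiv.Perm HalfPlane where
  toFun q := m (sig ‖q.val‖) q
  invFun q := m (tau ‖q.val‖) q
  left_inv := by
    intro q
    dsimp only
    have hn : 0 ≤ ‖q.val‖ := norm_nonneg _
    have h1 : ‖(m (sig ‖q.val‖) q).val‖ = sig ‖q.val‖ * ‖q.val‖ := by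
      rw [m_norm, abs_of_pos (sig_pos _)]
    rw [h1, m_m, tau_sig _ hn, m_one]
  right_inv := by
    intro q
    dsimp only
    have hn : 0 ≤ ‖q.val‖ := norm_nonneg _
    have h1 : ‖(m (tau ‖q.val‖) q).val‖ = tau ‖q.val‖ * ‖q.val‖ := by
      rw [m_norm, abs_of_pos (tau_pos _)]
    rw [h1, m_m, sig_tau _ hn, m_one]

lemma phiE_apply (q : HalfPlane) : phiE q = m (sig ‖q.val‖) q := rfl
lemma phiE_symm_apply (q : HalfPlane) : phiE.symm q = m (tau ‖q.val‖) q := rfl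

lemma phiE_cont : Continuous phiE := by
  show Continuous fun q : HalfPlane => m (sig ‖q.val‖) q
  have : Continuous (fun q : HalfPlane => (sig ‖q.val‖, q)) :=
    (sig_cont.comp contH).prodMk continuous_id
  exact (continuous_m).comp this

lemma phiE_symm_cont : Continuous phiE.symm := by
  show Continuous fun q : HalfPlane => m (tau ‖q.val‖) q
  have : Continuous (fun q : HalfPlane => (tau ‖q.val‖, q)) :=
    (tau_cont.comp contH).prodMk continuous_id
  exact (continuous_m).comp this

lemma phiE_half {q : HalfPlane} (h : ‖q.val‖ ≤ 4) : phiE q = m (1/2) q := by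
  rw [phiE_apply, sig_of_le _ h]

lemma phiE_id {q : HalfPlane} (h : 5 ≤ ‖q.val‖) : phiE q = q := by
  rw [phiE_apply, sig_of_ge _ h, m_one]

lemma phiE_norm (q : HalfPlane) : ‖(phiE q).val‖ = sig ‖q.val‖ * ‖q.val‖ := by
  rw [phiE_apply, m_norm, abs_of_pos (sig_pos _)]

lemma sig_mul_ge {r : ℝ} (h : 4 < r) : 2 ≤ sig r * r := by
  by_cases h5 : r ≤ 5
  · have hm : max r 4 = r := max_eq_left (by linarith)
    have : sig r = 3 - 10 / r := by unfold sig; rw [if_neg (by linarith), if_pos h5, hm]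
    rw [this]
    have hr : r ≠ 0 := by linarith
    have : (3 - 10 / r) * r = 3 * r - 10 := by field_simp
    rw [this]; linarith
  · rw [sig_of_ge r (by linarith), one_mul]; linarith

lemma inA_norm_le {k : ℕ} {q : HalfPlane} (h : inA k q) : ‖q.val‖ ≤ 3 := by
  have h1 : (1:ℝ) ≤ 2^k := one_le_pow₀ (by norm_num)
  nlinarith [h.2, norm_nonneg q.val]

lemma m_half_norm (q : HalfPlane) : ‖(m (1/2) q).val‖ = (1/2) * ‖q.val‖ := by
  rw [m_norm, abs_of_pos (by norm_num : (0:ℝ) < 1/2)]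

lemma swindle_key {e : Equiv.Perm HalfPlane} (he : fixP e) (w : HalfPlane) :
    swF e (phiE w) = e (phiE (swF e w)) := by
  by_cases hex : ∃ k, inA k w
  · obtain ⟨k, hk⟩ := hex
    have hp := two_pow_pos k
    have hp1 := two_pow_pos (k+1)
    have hw3 : ‖w.val‖ ≤ 3 := inA_norm_le hk
    rw [swF_of_inA e hk]
    set u := m ((2:ℝ)^k)⁻¹ (e (m ((2:ℝ)^k) w)) with hu_def
    have hu : inA k u := swF_mem he hk
    have hu3 : ‖u.val‖ ≤ 3 := inA_norm_le hu
    rw [phiE_half (by linarith : ‖w.val‖ ≤ 4), phiE_half (by linarith : ‖u.val‖ ≤ 4)]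
    have hinA : inA (k+1) (m (1/2) w) := by
      constructor <;> rw [m_half_norm, pow_succ]
      · nlinarith [hk.1]
      · nlinarith [hk.2]
    rw [swF_of_inA e hinA, m_m, show (2:ℝ)^(k+1) * (1/2) = 2^k by rw [pow_succ]; ring]
    rw [hu_def, m_m, show (1/2 : ℝ) * ((2:ℝ)^k)⁻¹ = ((2:ℝ)^(k+1))⁻¹ by
      rw [pow_succ]; field_simp]
    congr 1
    have hb : ‖(e (m ((2:ℝ)^k) w)).val‖ ≤ 3 := by
      have h1 : 2 ≤ ‖(m ((2:ℝ)^k) w).val‖ := by rw [m_pow_norm]; exact hk.1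
      have h2 : ‖(m ((2:ℝ)^k) w).val‖ ≤ 3 := by rw [m_pow_norm]; exact hk.2
      exact (fixP_norm he h1 h2).2
    have hz : ‖(m ((2:ℝ)^(k+1))⁻¹ (e (m ((2:ℝ)^k) w))).val‖ < 9/4 := by
      rw [m_norm, abs_of_pos (inv_pos.2 hp1)]
      have h2 : (2:ℝ) ≤ 2^(k+1) := by
        calc (2:ℝ) = 2^1 := (pow_one 2).symm
        _ ≤ 2^(k+1) := pow_le_pow_right₀ (by norm_num) (by omega)
      have hnn : 0 ≤ ‖(e (m ((2:ℝ)^k) w)).val‖ := norm_nonneg _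
      have : ((2:ℝ)^(k+1))⁻¹ ≤ 1/2 := by
        rw [inv_le_comm₀ hp1 (by norm_num)]; linarith
      nlinarith
    exact (he _ (Or.inl hz)).symm
  · rw [swF_of_not e hex]
    by_cases hj : ∃ j, inA j (phiE w)
    · obtain ⟨j, hjA⟩ := hj
      have hj0 : j = 0 := by
        by_contra hne
        have hj1 : 1 ≤ j := by omega
        have h2 : (2:ℝ)^1 ≤ 2^j := pow_le_pow_right₀ (by norm_num) hj1
        have hple : ‖(phiE w).val‖ ≤ 3/2 := by
          nlinarith [hjA.2, norm_nonneg (phiE w).val]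
        have hr4 : ‖w.val‖ ≤ 4 := by
          by_contra hr
          push_neg at hr
          have := sig_mul_ge hr
          rw [phiE_norm] at hple
          linarith
        have hnw : ‖(phiE w).val‖ = (1/2) * ‖w.val‖ := by
          rw [phiE_half hr4, m_half_norm]
        apply hex
        refine ⟨j - 1, ?_, ?_⟩
        · have := hjA.1
          rw [hnw] at this
          have hjj : j = (j-1) + 1 := by omega
          rw [hjj, pow_succ] at this
          linarith
        · have := hjA.2
          rw [hnw] at this
          have hjj : j = (j-1) + 1 := by omega
          rw [hjj, pow_succ] at this
          linarith
      subst hj0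
      rw [swF_of_inA e hjA, pow_zero, inv_one, m_one, m_one]
    · rw [swF_of_not e hj]
      have hnot0 : ¬ inA 0 (phiE w) := fun h => hj ⟨0, h⟩
      rw [inA, pow_zero, one_mul] at hnot0
      push_neg at hnot0
      refine (he _ ?_).symm
      by_cases hc : 2 ≤ ‖(phiE w).val‖
      · exact Or.inr (by linarith [hnot0 hc])
      · exact Or.inl (by linarith [not_le.mp hc])


/-- conjugation of a permutation by the dilation `m t`, `t ≠ 0`. -/
def conjDil (t : ℝ) (ht : t ≠ 0) (e : Equiv.Perm HalfPlane) : Equiv.Perm HalfPlane where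
  toFun q := m t (e (m t⁻¹ q))
  invFun q := m t (e.symm (m t⁻¹ q))
  left_inv := by
    intro q
    dsimp only
    rw [m_inv_m t ht, e.symm_apply_apply, m_m_inv t ht]
  right_inv := by
    intro q
    dsimp only
    rw [m_inv_m t ht, e.apply_symm_apply, m_m_inv t ht]

lemma conjDil_one (e : Equiv.Perm HalfPlane) : conjDil 1 one_ne_zero e = e := by
  apply Equiv.ext
  intro q
  show m 1 (e (m 1⁻¹ q)) = e q
  rw [inv_one, m_one, m_one]

lemma continuous_m_const (t : ℝ) : Continuous (m t) := by
  exact continuous_m.comp (continuous_const.prodMk continuous_id)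

lemma conjDil_isHomeo {e : Equiv.Perm HalfPlane} (t : ℝ) (ht : t ≠ 0)
    (h1 : Continuous e) (h2 : Continuous e.symm) : IsHomeo (conjDil t ht e) := by
  constructor
  · show Continuous fun q => m t (e (m t⁻¹ q))
    exact (continuous_m_const t).comp (h1.comp (continuous_m_const t⁻¹))
  · show Continuous fun q => m t (e.symm (m t⁻¹ q))
    exact (continuous_m_const t).comp (h2.comp (continuous_m_const t⁻¹))

lemma conjDil_compactSupp {e : Equiv.Perm HalfPlane} (t : ℝ) (ht : t ≠ 0)
    (h : CompactSupp e) : CompactSupp (conjDil t ht e) := by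
  obtain ⟨K, hK, hfix⟩ := h
  refine ⟨m t '' K, hK.image (continuous_m_const t), fun x hx => ?_⟩
  show m t (e (m t⁻¹ x)) = x
  by_cases hz : m t⁻¹ x ∈ K
  · exact absurd ⟨m t⁻¹ x, hz, m_m_inv t ht x⟩ hx
  · rw [hfix _ hz, m_m_inv t ht]

/-- displacement bound for a compactly supported continuous map -/
lemma disp_bound {e : Equiv.Perm HalfPlane} (hc : Continuous e) (hs : CompactSupp e) :
    ∃ C : ℝ, 0 ≤ C ∧ ∀ z : HalfPlane, dist (e z) z ≤ C := by
  obtain ⟨K, hK, hfix⟩ := hs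
  have hcont : ContinuousOn (fun z : HalfPlane => dist (e z) z) K :=
    ((hc.dist continuous_id).continuousOn)
  obtain ⟨C, hC⟩ := hK.exists_bound_of_continuousOn hcont
  refine ⟨max C 0, le_max_right _ _, fun z => ?_⟩
  by_cases hz : z ∈ K
  · have := hC z hz
    rw [Real.norm_eq_abs] at this
    calc dist (e z) z ≤ |dist (e z) z| := le_abs_self _
    _ ≤ C := this
    _ ≤ max C 0 := le_max_left _ _
  · rw [hfix z hz, dist_self]; exact le_max_right _ _

lemma dist_m (t : ℝ) (a b : HalfPlane) : dist (m t a) (m t b) = |t| * dist a b := by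
  rw [dist_H, dist_H, m_val, m_val, ← smul_sub, norm_smul]
  simp

/-- Alexander's trick towards the boundary point 0: every compactly supported
homeomorphism of the half plane is isotopic to the identity. -/
lemma alexander {e : Equiv.Perm HalfPlane} (h1 : IsHomeo e) (h2 : CompactSupp e) :
    IsotopicToId e := by
  classical
  obtain ⟨C, hC0, hC⟩ := disp_bound h1.1 h2
  refine ⟨fun t => if ht : (t : ℝ) = 0 then 1 else conjDil t ht e, fun t => ?_, ?_, ?_, ?_⟩
  · dsimp only
    by_cases ht : (t : ℝ) = 0
    · rw [dif_pos ht]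
      refine ⟨⟨?_, ?_⟩, ∅, isCompact_empty, fun x _ => rfl⟩
      · show Continuous fun q : HalfPlane => q; exact continuous_id
      · show Continuous fun q : HalfPlane => q; exact continuous_id
    · rw [dif_neg ht]
      exact ⟨conjDil_isHomeo t ht h1.1 h1.2, conjDil_compactSupp t ht h2⟩
  · -- joint continuity
    rw [continuous_iff_continuousAt]
    rintro ⟨t₀, q₀⟩
    by_cases ht₀ : (t₀ : ℝ) = 0
    · -- continuity at t = 0
      rw [Metric.continuousAt_iff]
      intro ε hε
      refine ⟨min (ε / (2 * (C + 1))) (ε / 2), by positivity, ?_⟩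
      rintro ⟨t, q⟩ hd
      rw [Prod.dist_eq, max_lt_iff] at hd
      obtain ⟨hdt, hdq⟩ := hd
      have hdisp : ∀ s : Set.Icc (0:ℝ) 1, ∀ x : HalfPlane,
          dist ((if hs : (s:ℝ) = 0 then 1 else conjDil s hs e) x) x ≤ (s:ℝ) * C := by
        intro s x
        by_cases hs : (s:ℝ) = 0
        · rw [dif_pos hs, hs, zero_mul]
          show dist x x ≤ 0
          rw [dist_self]
        · rw [dif_neg hs]
          show dist (m s (e (m s⁻¹ x))) x ≤ (s:ℝ) * C
          have hx : x = m s (m s⁻¹ x) := (m_m_inv s hs x).symm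
          nth_rewrite 2 [hx]
          rw [dist_m, abs_of_pos (lt_of_le_of_ne s.2.1 (Ne.symm hs))]
          exact mul_le_mul_of_nonneg_left (hC _) s.2.1
      have h0 : (if hs : (t₀:ℝ) = 0 then 1 else conjDil t₀ hs e) q₀ = q₀ := by
        rw [dif_pos ht₀]; rfl
      rw [h0]
      have ht1 : (t:ℝ) < ε / (2 * (C + 1)) := by
        have : dist t t₀ = |(t:ℝ) - t₀| := Subtype.dist_eq t t₀
        rw [this, ht₀, sub_zero, abs_of_nonneg t.2.1] at hdt
        exact lt_of_lt_of_le hdt (min_le_left _ _)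
      calc dist ((if hs : (t:ℝ) = 0 then 1 else conjDil t hs e) q) q₀
          ≤ dist ((if hs : (t:ℝ) = 0 then 1 else conjDil t hs e) q) q + dist q q₀ :=
            dist_triangle_right _ _ _ |>.trans (by rw [dist_comm q q₀])
        _ ≤ (t:ℝ) * C + dist q q₀ := by gcongr; exact hdisp t q
        _ < ε / (2 * (C + 1)) * C + ε / 2 := by
            apply add_lt_add_of_le_of_lt
            · exact mul_le_mul_of_nonneg_right (le_of_lt ht1) hC0
            · exact lt_of_lt_of_le hdq (min_le_right _ _)
        _ ≤ ε / 2 + ε / 2 := by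
            have : ε / (2 * (C + 1)) * C ≤ ε / 2 := by
              rw [div_mul_eq_mul_div, div_le_div_iff₀ (by positivity) (by norm_num)]
              nlinarith
            linarith
        _ = ε := by ring
    · -- continuity at t ≠ 0
      have hopen : IsOpen {p : Set.Icc (0:ℝ) 1 × HalfPlane | (p.1 : ℝ) ≠ 0} :=
        isOpen_ne.preimage ((continuous_subtype_val.comp continuous_fst))
      have hG : ContinuousAt (fun p : Set.Icc (0:ℝ) 1 × HalfPlane =>
          m (p.1:ℝ) (e (m ((p.1:ℝ))⁻¹ p.2))) (t₀, q₀) := by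
        have c1 : ContinuousAt (fun p : Set.Icc (0:ℝ) 1 × HalfPlane => ((p.1:ℝ))⁻¹)
            (t₀, q₀) := by
          apply ContinuousAt.inv₀
          · exact (continuous_subtype_val.comp continuous_fst).continuousAt
          · exact ht₀
        have c2 : ContinuousAt (fun p : Set.Icc (0:ℝ) 1 × HalfPlane =>
            m ((p.1:ℝ))⁻¹ p.2) (t₀, q₀) :=
          continuous_m.continuousAt.comp (c1.prodMk (continuous_snd.continuousAt))
        have c3 : ContinuousAt (fun p : Set.Icc (0:ℝ) 1 × HalfPlane =>
            e (m ((p.1:ℝ))⁻¹ p.2)) (t₀, q₀) := h1.1.continuousAt.comp c2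
        exact continuous_m.continuousAt.comp
          (((continuous_subtype_val.comp continuous_fst).continuousAt).prodMk c3)
      apply ContinuousAt.congr hG
      filter_upwards [hopen.mem_nhds ht₀] with p hp
      symm
      show (if hs : (p.1:ℝ) = 0 then 1 else conjDil (p.1:ℝ) hs e) p.2
          = m (p.1:ℝ) (e (m ((p.1:ℝ))⁻¹ p.2))
      rw [dif_neg hp]
      rfl
  · dsimp only
    rw [dif_pos rfl]
  · dsimp only
    rw [dif_neg one_ne_zero]
    exact conjDil_one e


lemma isCompact_ballH (R : ℝ) : IsCompact {q : HalfPlane | ‖q.val‖ ≤ R} := by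
  rw [Subtype.isCompact_iff]
  have himg : Subtype.val '' {q : HalfPlane | ‖q.val‖ ≤ R}
      = {p : ℝ × ℝ | ‖p‖ ≤ R} ∩ {p : ℝ × ℝ | 0 ≤ p.2} := by
    ext p
    constructor
    · rintro ⟨q, hq, rfl⟩; exact ⟨hq, q.2⟩
    · rintro ⟨h1, h2⟩; exact ⟨⟨p, h2⟩, h1, rfl⟩
  rw [himg]
  apply IsCompact.inter_right
  · have : {p : ℝ × ℝ | ‖p‖ ≤ R} = Metric.closedBall 0 R := by
      ext p; simp [Metric.mem_closedBall, dist_zero_right]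
    rw [this]; exact isCompact_closedBall _ _
  · exact isClosed_le continuous_const continuous_snd

/-- conjugation `L e L⁻¹` -/
def cnj (L e : Equiv.Perm HalfPlane) : Equiv.Perm HalfPlane := (L.symm.trans e).trans L

lemma cnj_apply (L e : Equiv.Perm HalfPlane) (q : HalfPlane) :
    cnj L e q = L (e (L.symm q)) := rfl

lemma cnj_symm (L e : Equiv.Perm HalfPlane) : (cnj L e).symm = cnj L e.symm := rfl

lemma cnj_isHomeo {L e : Equiv.Perm HalfPlane} (hL1 : Continuous L) (hL2 : Continuous L.symm)
    (he : IsHomeo e) : IsHomeo (cnj L e) := by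
  constructor
  · show Continuous fun q => L (e (L.symm q))
    exact hL1.comp (he.1.comp hL2)
  · show Continuous fun q => L (e.symm (L.symm q))
    exact hL1.comp (he.2.comp hL2)

lemma cnj_compactSupp {L e : Equiv.Perm HalfPlane} (hL1 : Continuous L)
    (he : CompactSupp e) : CompactSupp (cnj L e) := by
  obtain ⟨K, hK, hfix⟩ := he
  refine ⟨L '' K, hK.image hL1, fun x hx => ?_⟩
  rw [cnj_apply]
  by_cases hz : L.symm x ∈ K
  · exact absurd ⟨L.symm x, hz, L.apply_symm_apply x⟩ hx
  · rw [hfix _ hz, L.apply_symm_apply]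

/-- the affine normalizing map -/
def lam (M : ℝ) (hM : 0 < M) : Equiv.Perm HalfPlane where
  toFun q := ⟨(4*M*q.val.1 + 10*M, 4*M*q.val.2), mul_nonneg (by positivity) q.2⟩
  invFun q := ⟨((q.val.1 - 10*M)/(4*M), q.val.2/(4*M)), div_nonneg q.2 (by positivity)⟩
  left_inv := by
    intro q
    apply Subtype.ext
    have h4 : (4*M) ≠ 0 := by positivity
    apply Prod.ext <;> dsimp only <;> field_simp <;> ring
  right_inv := by
    intro q
    apply Subtype.ext
    have h4 : (4*M) ≠ 0 := by positivity
    apply Prod.ext <;> dsimp only <;> field_simp <;> ring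

lemma lam_cont (M : ℝ) (hM : 0 < M) : Continuous (lam M hM) := by
  show Continuous fun q : HalfPlane =>
    (⟨(4*M*q.val.1 + 10*M, 4*M*q.val.2), _⟩ : HalfPlane)
  apply Continuous.subtype_mk
  fun_prop

lemma lam_symm_cont (M : ℝ) (hM : 0 < M) : Continuous (lam M hM).symm := by
  show Continuous fun q : HalfPlane =>
    (⟨((q.val.1 - 10*M)/(4*M), q.val.2/(4*M)), _⟩ : HalfPlane)
  apply Continuous.subtype_mk
  fun_prop

lemma cnj_mul (L a b : Equiv.Perm HalfPlane) : cnj L (a * b) = cnj L a * cnj L b := by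
  apply Equiv.ext
  intro q
  rw [Equiv.Perm.mul_apply, cnj_apply, cnj_apply, cnj_apply, Equiv.Perm.mul_apply,
    Equiv.symm_apply_apply]

lemma cnj_inv (L a : Equiv.Perm HalfPlane) : cnj L a⁻¹ = (cnj L a)⁻¹ := by
  rw [show a⁻¹ = a.symm from rfl, show (cnj L a)⁻¹ = (cnj L a).symm from rfl, cnj_symm]

lemma cnj_cnj (L e : Equiv.Perm HalfPlane) : cnj L (cnj L.symm e) = e := by
  apply Equiv.ext
  intro q
  rw [cnj_apply, cnj_apply, Equiv.symm_symm, Equiv.apply_symm_apply, Equiv.apply_symm_apply]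

lemma lam_fixP (h : Equiv.Perm HalfPlane) (K : Set HalfPlane)
    (hKfix : ∀ x ∉ K, h x = x) (M : ℝ) (hM : 0 < M) (hKM : ∀ x ∈ K, ‖x.val‖ ≤ M) :
    fixP (cnj (lam M hM).symm h) := by
  intro q hq
  rw [cnj_apply, Equiv.symm_symm]
  have hnotin : lam M hM q ∉ K := by
    intro hin
    have hle := hKM _ hin
    have hval : ((lam M hM) q).val = (4*M*q.val.1 + 10*M, 4*M*q.val.2) := rfl
    rw [hval, Prod.norm_def] at hle
    have h1 : |4*M*q.val.1 + 10*M| ≤ M := by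
      have := le_of_max_le_left hle
      rwa [Real.norm_eq_abs] at this
    have h2 : 4*M*q.val.2 ≤ M := by
      have := le_of_max_le_right hle
      rw [Real.norm_eq_abs, abs_of_nonneg (mul_nonneg (by positivity) q.2)] at this
      exact this
    rw [abs_le] at h1
    have hx1 : q.val.1 ≤ -(9/4) := by nlinarith [h1.2]
    have hx2 : -(11/4) ≤ q.val.1 := by nlinarith [h1.1]
    have hy : q.val.2 ≤ 1/4 := by nlinarith
    have hnq : ‖q.val‖ = |q.val.1| := by
      rw [Prod.norm_def, Real.norm_eq_abs, Real.norm_eq_abs]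
      apply max_eq_left
      rw [abs_of_nonneg q.2, abs_of_nonpos (by linarith : q.val.1 ≤ 0)]
      linarith
    have habs : |q.val.1| = -q.val.1 := abs_of_nonpos (by linarith)
    rcases hq with hlt | hgt
    · rw [hnq, habs] at hlt; linarith
    · rw [hnq, habs] at hgt; linarith
  rw [hKfix _ hnotin, Equiv.symm_apply_apply]


theorem half_plane_homeo_is_single_commutator
    (h : Equiv.Perm HalfPlane) (hh : InHomeoZero h) :
    ∃ g φ : Equiv.Perm HalfPlane, InHomeoZero g ∧ InHomeoZero φ ∧
      h = g * φ * g⁻¹ * φ⁻¹ := by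
  obtain ⟨hHom, ⟨K, hK, hKfix⟩, _⟩ := hh
  -- bound the support
  obtain ⟨r, hr⟩ := ((hK.image continuous_subtype_val).isBounded).subset_closedBall 0
  set M : ℝ := max r 1 with hMdef
  have hM : 0 < M := lt_of_lt_of_le one_pos (le_max_right r 1)
  have hKM : ∀ x ∈ K, ‖x.val‖ ≤ M := by
    intro x hx
    have := hr ⟨x, hx, rfl⟩
    rw [Metric.mem_closedBall, dist_zero_right] at this
    exact le_trans this (le_max_left r 1)
  set L := lam M hM with hLdef
  have hL1 : Continuous L := lam_cont M hM
  have hL2 : Continuous L.symm := lam_symm_cont M hM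
  set h₁ := cnj L.symm h with h₁def
  have hfix : fixP h₁ := lam_fixP h K hKfix M hM hKM
  have hH1 : IsHomeo h₁ := by
    apply cnj_isHomeo hL2 _ hHom
    rw [Equiv.symm_symm]; exact hL1
  set g₁ := swE h₁ hfix with hg₁def
  have hg₁coe : ⇑g₁ = swF h₁ := rfl
  have hg₁symmcoe : ⇑g₁.symm = swF h₁.symm := rfl
  have hg₁H : IsHomeo g₁ := by
    constructor
    · rw [hg₁coe]; exact swF_continuous hfix hH1.1
    · rw [hg₁symmcoe]; exact swF_continuous (fixP_symm hfix) hH1.2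
  have hg₁S : CompactSupp g₁ := by
    refine ⟨{q : HalfPlane | ‖q.val‖ ≤ 3}, isCompact_ballH 3, fun x hx => ?_⟩
    exact swF_id_big h₁ (not_le.mp hx)
  have hφH : IsHomeo phiE := ⟨phiE_cont, phiE_symm_cont⟩
  have hφS : CompactSupp phiE := by
    refine ⟨{q : HalfPlane | ‖q.val‖ ≤ 5}, isCompact_ballH 5, fun x hx => ?_⟩
    exact phiE_id (le_of_lt (not_le.mp hx))
  -- the commutator identity downstairs
  have key : ∀ x, h₁ x = g₁ (phiE (g₁.symm (phiE.symm x))) := by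
    intro x
    have hsk := swindle_key hfix (g₁.symm (phiE.symm x))
    have e1 : swF h₁ (g₁.symm (phiE.symm x)) = phiE.symm x := g₁.apply_symm_apply _
    rw [e1, phiE.apply_symm_apply] at hsk
    exact hsk.symm
  have hcomm₁ : h₁ = g₁ * phiE * g₁⁻¹ * phiE⁻¹ := by
    apply Equiv.ext
    intro x
    rw [Equiv.Perm.mul_apply, Equiv.Perm.mul_apply, Equiv.Perm.mul_apply]
    exact key x
  refine ⟨cnj L g₁, cnj L phiE, ?_, ?_, ?_⟩
  · refine ⟨cnj_isHomeo hL1 hL2 hg₁H, cnj_compactSupp hL1 hg₁S, ?_⟩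
    exact alexander (cnj_isHomeo hL1 hL2 hg₁H) (cnj_compactSupp hL1 hg₁S)
  · refine ⟨cnj_isHomeo hL1 hL2 hφH, cnj_compactSupp hL1 hφS, ?_⟩
    exact alexander (cnj_isHomeo hL1 hL2 hφH) (cnj_compactSupp hL1 hφS)
  · calc h = cnj L h₁ := (cnj_cnj L h).symm
    _ = cnj L (g₁ * phiE * g₁⁻¹ * phiE⁻¹) := by rw [← hcomm₁]
    _ = cnj L g₁ * cnj L phiE * (cnj L g₁)⁻¹ * (cnj L phiE)⁻¹ := by
        rw [cnj_mul, cnj_mul, cnj_mul, cnj_inv, cnj_inv]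
end
end
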